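/- Let Σ_x, Σ_e ∈ ℝ^{m×m} be symmetric positive definite matrices with all diagonal entries of Σ_x equal to 1, and let B = diag(b₁, …, b_m) be a diagonal matrix such that b_i² + (Σ_e)_{ii} = 1 for all i (equivalently, the matrix Σ_y := B Σ_x B + Σ_e has unit diagonal). Define Σ_d := (I − B²) Σ_x (I − B²) + B Σ_e B. Then log det Σ_y + log det Σ_d ≥ log det Σ_x + log det Σ_e. -/

import Mathlib

open Matrix

section Aux

set_option linter.unusedSectionVars false

variable {n : Type*} [Fintype n] [DecidableEq n]

lemma myCT {k l : Type*} (M : Matrix k l ℝ) : Mᴴ = Mᵀ := by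
  ext i j; simp [conjTranspose_apply]

lemma myPosDef_conj {A B : Matrix n n ℝ} (hA : A.PosDef) (hB : IsUnit B) :
    (Bᴴ * A * B).PosDef := by
  refine Matrix.PosDef.of_dotProduct_mulVec_pos (isHermitian_conjTranspose_mul_mul B hA.1) (fun x hx => ?_)
  have hBx : B *ᵥ x ≠ 0 := by
    intro h
    exact hx ((Matrix.mulVec_injective_iff_isUnit.mpr hB) (h.trans (Matrix.mulVec_zero B).symm))
  simpa only [star_mulVec, dotProduct_mulVec, vecMul_vecMul] using hA.dotProduct_mulVec_pos hBx

lemma myDet_nonneg {M : Matrix n n ℝ} (hM : M.PosSemidef) : 0 ≤ M.det := by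
  rw [hM.1.det_eq_prod_eigenvalues]
  exact Finset.prod_nonneg fun i _ => by simpa using hM.eigenvalues_nonneg i

lemma myOne_le_det_one_add {K : Matrix n n ℝ} (hK : K.PosSemidef) :
    (1 : ℝ) ≤ (1 + K).det := by
  have hUU : (hK.1.eigenvectorUnitary : Matrix n n ℝ) * star (hK.1.eigenvectorUnitary : Matrix n n ℝ) = 1 :=
    (Matrix.mem_unitaryGroup_iff).mp hK.1.eigenvectorUnitary.2
  have h1 : (1 : Matrix n n ℝ) + K =
      (hK.1.eigenvectorUnitary : Matrix n n ℝ)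
        * (1 + diagonal (RCLike.ofReal ∘ hK.1.eigenvalues))
        * star (hK.1.eigenvectorUnitary : Matrix n n ℝ) := by
    conv_lhs => rw [hK.1.spectral_theorem, Unitary.conjStarAlgAut_apply]
    rw [Matrix.mul_add, Matrix.add_mul, Matrix.mul_one, hUU]
  rw [h1, Matrix.det_mul_right_comm, hUU, Matrix.one_mul]
  have h2 : (1 : Matrix n n ℝ) + diagonal (RCLike.ofReal ∘ hK.1.eigenvalues)
      = diagonal (fun i => 1 + hK.1.eigenvalues i) := by
    rw [← Matrix.diagonal_one, Matrix.diagonal_add]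
    simp [RCLike.ofReal_real_eq_id]
  rw [h2, Matrix.det_diagonal]
  calc (1:ℝ) = ∏ _i : n, (1:ℝ) := by simp
    _ ≤ ∏ i : n, (1 + hK.1.eigenvalues i) :=
        Finset.prod_le_prod (fun i _ => zero_le_one)
          (fun i _ => by linarith [hK.eigenvalues_nonneg i])

lemma myDet_le_det_add {M N : Matrix n n ℝ} (hM : M.PosSemidef) (hN : N.PosSemidef) :
    M.det ≤ (M + N).det := by
  by_cases hd : M.det = 0
  · rw [hd]
    exact myDet_nonneg (hM.add hN)
  · open scoped MatrixOrder in
    set S := CFC.sqrt M with hSdef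
    open scoped MatrixOrder in
    have hS : S.PosSemidef := (CFC.sqrt_nonneg M).posSemidef
    open scoped MatrixOrder in
    have hSS : S * S = M := CFC.sqrt_mul_sqrt_self M hM.nonneg
    have hdetS : S.det ≠ 0 := by
      intro h
      apply hd
      rw [← hSS, Matrix.det_mul, h, zero_mul]
    have hSinv : S * S⁻¹ = 1 := Matrix.mul_nonsing_inv S hdetS.isUnit
    have hSinv' : S⁻¹ * S = 1 := Matrix.nonsing_inv_mul S hdetS.isUnit
    have hShi : S⁻¹ᴴ = S⁻¹ := hS.1.inv
    have hK : (S⁻¹ * N * S⁻¹).PosSemidef := by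
      have := hN.conjTranspose_mul_mul_same S⁻¹
      rwa [hShi] at this
    have hmid : S * (S⁻¹ * N * S⁻¹) * S = N := by
      calc S * (S⁻¹ * N * S⁻¹) * S = (S * S⁻¹) * N * (S⁻¹ * S) := by
            simp only [Matrix.mul_assoc]
          _ = N := by rw [hSinv, hSinv', Matrix.one_mul, Matrix.mul_one]
    have key : M + N = S * (1 + S⁻¹ * N * S⁻¹) * S := by
      rw [Matrix.mul_add, Matrix.add_mul, Matrix.mul_one, hSS, hmid]
    have h1 : (1 : ℝ) ≤ (1 + S⁻¹ * N * S⁻¹).det := myOne_le_det_one_add hK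
    have hMdet : M.det = S.det * S.det := by rw [← hSS, Matrix.det_mul]
    have hMpos : 0 < M.det := lt_of_le_of_ne (myDet_nonneg hM) (Ne.symm hd)
    rw [key, Matrix.det_mul, Matrix.det_mul]
    nlinarith

lemma myPosDef_fromBlocks₂₂ {p : Type*} [Fintype p] [DecidableEq p]
    {A : Matrix n n ℝ} {B : Matrix n p ℝ} {C : Matrix p n ℝ} {D : Matrix p p ℝ}
    (h : (fromBlocks A B C D).PosDef) : D.PosDef := by
  refine Matrix.PosDef.of_dotProduct_mulVec_pos (isHermitian_fromBlocks_iff.mp h.1).2.2.2 (fun y hy => ?_)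
  have hx : (Sum.elim (0 : n → ℝ) y) ≠ 0 := by
    intro hc
    exact hy (funext fun i => congrFun hc (Sum.inr i))
  have := h.dotProduct_mulVec_pos hx
  simpa [Function.star_sumElim, fromBlocks_mulVec, sumElim_dotProduct_sumElim] using this

lemma myPosDef_blockDiag {p : Type*} [Fintype p] [DecidableEq p]
    {A : Matrix n n ℝ} {D : Matrix p p ℝ} (hA : A.PosDef) (hD : D.PosDef) :
    (fromBlocks A 0 0 D).PosDef := by
  refine Matrix.PosDef.of_dotProduct_mulVec_pos (isHermitian_fromBlocks_iff.mpr ⟨hA.1, by simp, by simp, hD.1⟩) (fun x hx => ?_)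
  have hsplit : x = Sum.elim (x ∘ Sum.inl) (x ∘ Sum.inr) := (Sum.elim_comp_inl_inr x).symm
  rw [hsplit]
  simp only [Function.star_sumElim, fromBlocks_mulVec, sumElim_dotProduct_sumElim,
    Matrix.zero_mulVec, add_zero, zero_add, Sum.elim_comp_inl, Sum.elim_comp_inr]
  rcases (show x ∘ Sum.inl ≠ 0 ∨ x ∘ Sum.inr ≠ 0 by
    by_contra hc
    push_neg at hc
    exact hx (funext fun i => by
      cases i with
      | inl i => exact congrFun hc.1 i
      | inr i => exact congrFun hc.2 i)) with h1 | h2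
  · exact add_pos_of_pos_of_nonneg (hA.dotProduct_mulVec_pos h1) (hD.posSemidef.dotProduct_mulVec_nonneg _)
  · exact add_pos_of_nonneg_of_pos (hA.posSemidef.dotProduct_mulVec_nonneg _) (hD.dotProduct_mulVec_pos h2)

end Aux

theorem stmt18 {m : ℕ} (Sx Se : Matrix (Fin m) (Fin m) ℝ)
    (hx : Sx.PosDef) (he : Se.PosDef)
    (hxd : ∀ i, Sx i i = 1)
    (b : Fin m → ℝ) (hb : ∀ i, b i ^ 2 + Se i i = 1) :
    Real.log Sx.det + Real.log Se.det
      ≤ Real.log (Matrix.diagonal b * Sx * Matrix.diagonal b + Se).det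
        + Real.log ((1 - Matrix.diagonal b * Matrix.diagonal b) * Sx
              * (1 - Matrix.diagonal b * Matrix.diagonal b)
            + Matrix.diagonal b * Se * Matrix.diagonal b).det := by
  classical
  set D : Matrix (Fin m) (Fin m) ℝ := Matrix.diagonal b with hD
  set P : Matrix (Fin m) (Fin m) ℝ := 1 - D * D with hP
  set Sy : Matrix (Fin m) (Fin m) ℝ := D * Sx * D + Se with hSy
  set Sd : Matrix (Fin m) (Fin m) ℝ := P * Sx * P + D * Se * D with hSd
  set C : Matrix (Fin m) (Fin m) ℝ := D * Sx * P - Se * D with hC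
  have hDt : Dᵀ = D := Matrix.diagonal_transpose b
  have hPt : Pᵀ = P := by
    rw [hP, Matrix.transpose_sub, Matrix.transpose_one, Matrix.transpose_mul, hDt]
  have hxt : Sxᵀ = Sx := by rw [← myCT, hx.1]
  have het : Seᵀ = Se := by rw [← myCT, he.1]
  set T : Matrix (Fin m ⊕ Fin m) (Fin m ⊕ Fin m) ℝ := fromBlocks D 1 P (-D) with hT
  set A : Matrix (Fin m ⊕ Fin m) (Fin m ⊕ Fin m) ℝ := fromBlocks Sx 0 0 Se with hA
  have hTfact : T = (fromBlocks 1 0 (-D) 1 : Matrix (Fin m ⊕ Fin m) (Fin m ⊕ Fin m) ℝ) *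
      (fromBlocks 1 D 0 1 : Matrix (Fin m ⊕ Fin m) (Fin m ⊕ Fin m) ℝ) *
      (fromBlocks 0 1 1 0 : Matrix (Fin m ⊕ Fin m) (Fin m ⊕ Fin m) ℝ) := by
    rw [hT, hP]
    simp only [Matrix.fromBlocks_multiply, Matrix.fromBlocks_inj]
    refine ⟨by noncomm_ring, by noncomm_ring, by noncomm_ring, by noncomm_ring⟩
  have hJJ : (fromBlocks 0 1 1 0 : Matrix (Fin m ⊕ Fin m) (Fin m ⊕ Fin m) ℝ) *
      (fromBlocks 0 1 1 0 : Matrix (Fin m ⊕ Fin m) (Fin m ⊕ Fin m) ℝ) = 1 := by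
    simp [Matrix.fromBlocks_multiply, ← Matrix.fromBlocks_one]
  have hJunit : IsUnit (fromBlocks 0 1 1 0 : Matrix (Fin m ⊕ Fin m) (Fin m ⊕ Fin m) ℝ) :=
    ⟨⟨_, _, hJJ, hJJ⟩, rfl⟩
  have hTunit : IsUnit T := by
    rw [hTfact]
    refine (IsUnit.mul (IsUnit.mul ?_ ?_) hJunit)
    · rw [Matrix.isUnit_iff_isUnit_det, Matrix.det_fromBlocks_zero₁₂]
      simp
    · rw [Matrix.isUnit_iff_isUnit_det, Matrix.det_fromBlocks_zero₂₁]
      simp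
  have hdetT : T.det * T.det = 1 := by
    have hJ2 : (fromBlocks 0 1 1 0 : Matrix (Fin m ⊕ Fin m) (Fin m ⊕ Fin m) ℝ).det *
        (fromBlocks 0 1 1 0 : Matrix (Fin m ⊕ Fin m) (Fin m ⊕ Fin m) ℝ).det = 1 := by
      rw [← Matrix.det_mul, hJJ, Matrix.det_one]
    rw [hTfact]
    simp only [Matrix.det_mul, Matrix.det_fromBlocks_zero₁₂, Matrix.det_fromBlocks_zero₂₁,
      Matrix.det_one, one_mul, mul_one]
    nlinarith [hJ2]
  have hCt : Cᵀ = P * Sx * D - D * Se := by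
    rw [hC, Matrix.transpose_sub, Matrix.transpose_mul, Matrix.transpose_mul,
      Matrix.transpose_mul, hDt, hPt, hxt, het, Matrix.mul_assoc]
  have hStruct : T * A * Tᵀ = fromBlocks Sy C Cᵀ Sd := by
    rw [hT, hA, Matrix.fromBlocks_transpose, hDt, Matrix.transpose_one, hPt,
      Matrix.transpose_neg, hDt, Matrix.fromBlocks_multiply, Matrix.fromBlocks_multiply,
      Matrix.fromBlocks_inj, hSy, hC, hSd, hCt]
    refine ⟨by noncomm_ring, by noncomm_ring, by noncomm_ring, by noncomm_ring⟩
  have hAd : A.PosDef := myPosDef_blockDiag hx he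
  have hTt : IsUnit Tᵀ := by
    rw [Matrix.isUnit_iff_isUnit_det, Matrix.det_transpose, ← Matrix.isUnit_iff_isUnit_det]
    exact hTunit
  have hSpd : (fromBlocks Sy C Cᵀ Sd).PosDef := by
    rw [← hStruct]
    have := myPosDef_conj hAd hTt
    rwa [myCT, Matrix.transpose_transpose] at this
  have hDSxD : (D * Sx * D).PosSemidef := by
    have := hx.posSemidef.mul_mul_conjTranspose_same D
    rwa [myCT, hDt] at this
  have hSyd : Sy.PosDef := Matrix.PosDef.posSemidef_add hDSxD he
  have hSdd : Sd.PosDef := myPosDef_fromBlocks₂₂ hSpd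
  haveI : Invertible Sy := Sy.invertibleOfIsUnitDet hSyd.det_pos.ne'.isUnit
  have hdetS : (fromBlocks Sy C Cᵀ Sd).det = Sy.det * (Sd - Cᵀ * Sy⁻¹ * C).det := by
    rw [Matrix.det_fromBlocks₁₁, Matrix.invOf_eq_nonsing_inv]
  have hdetS' : (fromBlocks Sy C Cᵀ Sd).det = Sx.det * Se.det := by
    rw [← hStruct, Matrix.det_mul, Matrix.det_mul, Matrix.det_transpose, hA,
      Matrix.det_fromBlocks_zero₂₁]
    linear_combination Sx.det * Se.det * hdetT
  have hschur : (Sd - Cᵀ * Sy⁻¹ * C).PosSemidef := by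
    have hCc : Cᴴ = Cᵀ := myCT C
    have h1 : (fromBlocks Sy C Cᴴ Sd).PosSemidef := by
      rw [hCc]; exact hSpd.posSemidef
    have := (Matrix.PosDef.fromBlocks₁₁ C Sd hSyd).mp h1
    rwa [hCc] at this
  have hdle : (Sd - Cᵀ * Sy⁻¹ * C).det ≤ Sd.det := by
    have h2 : (Cᵀ * Sy⁻¹ * C).PosSemidef := by
      have := (hSyd.inv.posSemidef).conjTranspose_mul_mul_same C
      rwa [myCT] at this
    have := myDet_le_det_add hschur h2
    rwa [sub_add_cancel] at this
  have hxpos := hx.det_pos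
  have hepos := he.det_pos
  have hSypos := hSyd.det_pos
  have hSdpos := hSdd.det_pos
  have hprod : Sx.det * Se.det = Sy.det * (Sd - Cᵀ * Sy⁻¹ * C).det := by
    rw [← hdetS', hdetS]
  have hle : Sx.det * Se.det ≤ Sy.det * Sd.det := by
    rw [hprod]
    exact mul_le_mul_of_nonneg_left hdle hSypos.le
  calc Real.log Sx.det + Real.log Se.det
      = Real.log (Sx.det * Se.det) := (Real.log_mul hxpos.ne' hepos.ne').symm
    _ ≤ Real.log (Sy.det * Sd.det) := Real.log_le_log (by positivity) hle
    _ = Real.log Sy.det + Real.log Sd.det := Real.log_mul hSypos.ne' hSdpos.ne'
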